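/- For s < 0 and t > 0, the maximum absolute determinant of an n×n upper Hessenberg matrix with subdiagonal entries fixed at s and upper-triangular entries in [0,t] equals t·(t−s)^{n−1}. -/

import Mathlib

/-- `A` is an `n×n` upper Hessenberg matrix with subdiagonal entries `s`
and upper-triangular entries in `[0,t]`. -/
def IsUpperHessenbergIcc (s t : ℝ) {n : ℕ} (A : Matrix (Fin n) (Fin n) ℝ) : Prop :=
  (∀ i j : Fin n, (i : ℕ) = (j : ℕ) + 1 → A i j = s) ∧
  (∀ i j : Fin n, (j : ℕ) + 1 < (i : ℕ) → A i j = 0) ∧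
  (∀ i j : Fin n, (i : ℕ) ≤ (j : ℕ) → A i j ∈ Set.Icc (0 : ℝ) t)

private lemma val_succAbove_one {n : ℕ} (i : Fin (n+1)) :
    (((1 : Fin (n+2)).succAbove i : ℕ)) = if (i:ℕ) = 0 then (i:ℕ) else (i:ℕ)+1 := by
  simp [Fin.succAbove, Fin.lt_def]
  split_ifs <;> simp

private lemma det_expand {n : ℕ} (A : Matrix (Fin (n+2)) (Fin (n+2)) ℝ)
    (h : ∀ i : Fin (n+2), 1 < (i:ℕ) → A i 0 = 0) :
    A.det = A 0 0 * (A.submatrix Fin.succ Fin.succ).det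
          - A 1 0 * (A.submatrix ((1 : Fin (n+2)).succAbove) Fin.succ).det := by
  rw [Matrix.det_succ_column_zero, Fin.sum_univ_succ, Fin.sum_univ_succ]
  have h0 : ∀ i : Fin n, A i.succ.succ 0 = 0 := fun i => h _ (by simp)
  simp [h0, Fin.succAbove_zero]
  ring

private lemma hess_sub_succ {s t : ℝ} {n : ℕ} {A : Matrix (Fin (n+2)) (Fin (n+2)) ℝ}
    (hA : IsUpperHessenbergIcc s t A) :
    IsUpperHessenbergIcc s t (A.submatrix Fin.succ Fin.succ) := by
  obtain ⟨h1, h2, h3⟩ := hA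
  refine ⟨fun i j hij => h1 _ _ (by simp [Fin.val_succ]; omega),
    fun i j hij => h2 _ _ (by simp [Fin.val_succ]; omega),
    fun i j hij => h3 _ _ (by simp [Fin.val_succ]; omega)⟩

private lemma hess_sub_one {s t : ℝ} {n : ℕ} {A : Matrix (Fin (n+2)) (Fin (n+2)) ℝ}
    (hA : IsUpperHessenbergIcc s t A) :
    IsUpperHessenbergIcc s t (A.submatrix ((1 : Fin (n+2)).succAbove) Fin.succ) := by
  obtain ⟨h1, h2, h3⟩ := hA
  refine ⟨fun i j hij => h1 _ _ ?_, fun i j hij => h2 _ _ ?_, fun i j hij => h3 _ _ ?_⟩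
  · rw [val_succAbove_one, Fin.val_succ]; split_ifs <;> omega
  · rw [val_succAbove_one, Fin.val_succ] at *; split_ifs <;> omega
  · rw [val_succAbove_one, Fin.val_succ]; split_ifs <;> omega

private lemma hess_bound {s t : ℝ} (hs : s < 0) (ht : 0 < t) :
    ∀ n : ℕ, ∀ A : Matrix (Fin (n+1)) (Fin (n+1)) ℝ,
      IsUpperHessenbergIcc s t A → |A.det| ≤ t * (t - s) ^ n := by
  intro n
  induction n with
  | zero =>
    intro A hA
    have h := hA.2.2 0 0 le_rfl
    rw [Matrix.det_fin_one]
    simp only [pow_zero, mul_one]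
    rw [abs_of_nonneg h.1]
    exact h.2
  | succ m ih =>
    intro A hA
    have hz : ∀ i : Fin (m+2), 1 < (i:ℕ) → A i 0 = 0 := by
      intro i hi
      exact hA.2.1 i 0 (by simpa using hi)
    rw [det_expand A hz]
    have h00 := hA.2.2 0 0 le_rfl
    have h10 : A 1 0 = s := hA.1 1 0 (by simp)
    have hB := ih _ (hess_sub_succ hA)
    have hC := ih _ (hess_sub_one hA)
    have hts : (0:ℝ) < t - s := by linarith
    calc |A 0 0 * (A.submatrix Fin.succ Fin.succ).det
          - A 1 0 * (A.submatrix ((1 : Fin (m+2)).succAbove) Fin.succ).det|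
        ≤ |A 0 0| * |(A.submatrix Fin.succ Fin.succ).det|
          + |A 1 0| * |(A.submatrix ((1 : Fin (m+2)).succAbove) Fin.succ).det| := by
          rw [← abs_mul, ← abs_mul]; exact abs_sub _ _
      _ ≤ t * (t * (t - s) ^ m) + (-s) * (t * (t - s) ^ m) := by
          have hb0 : (0:ℝ) ≤ t * (t - s) ^ m := by positivity
          gcongr <;>
            first
              | linarith
              | (rw [abs_of_nonneg h00.1]; exact h00.2)
              | (rw [h10, abs_of_neg hs])
      _ = t * (t - s) ^ (m + 1) := by ring

/-- The extremal matrix: all `t` on and above the diagonal, `s` below. -/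
private def Mcan (s t : ℝ) (n : ℕ) : Matrix (Fin n) (Fin n) ℝ :=
  fun i j => if (i:ℕ) ≤ (j:ℕ) then t else if (i:ℕ) = (j:ℕ) + 1 then s else 0

private lemma hess_can (s t : ℝ) (ht : 0 < t) (n : ℕ) :
    IsUpperHessenbergIcc s t (Mcan s t n) := by
  refine ⟨fun i j hij => ?_, fun i j hij => ?_, fun i j hij => ?_⟩
  · simp only [Mcan]; rw [if_neg (by omega), if_pos hij]
  · simp only [Mcan]; rw [if_neg (by omega), if_neg (by omega)]
  · simp only [Mcan]; rw [if_pos hij]; exact ⟨le_of_lt ht, le_rfl⟩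

private lemma Mcan_sub_succ (s t : ℝ) (n : ℕ) :
    (Mcan s t (n+2)).submatrix Fin.succ Fin.succ = Mcan s t (n+1) := by
  ext i j
  simp only [Matrix.submatrix_apply, Mcan, Fin.val_succ]
  split_ifs <;> first | rfl | omega

private lemma Mcan_sub_one (s t : ℝ) (n : ℕ) :
    (Mcan s t (n+2)).submatrix ((1 : Fin (n+2)).succAbove) Fin.succ = Mcan s t (n+1) := by
  ext i j
  simp only [Matrix.submatrix_apply, Mcan, Fin.val_succ, val_succAbove_one]
  split_ifs <;> first | rfl | omega

private lemma det_can (s t : ℝ) : ∀ n : ℕ, (Mcan s t (n+1)).det = t * (t - s) ^ n := by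
  intro n
  induction n with
  | zero =>
    rw [Matrix.det_fin_one]
    simp [Mcan]
  | succ m ih =>
    have hz : ∀ i : Fin (m+2), 1 < (i:ℕ) → Mcan s t (m+2) i 0 = 0 := by
      intro i hi
      simp only [Mcan]
      rw [if_neg (by show ¬ ((i:ℕ) ≤ 0); omega), if_neg (by show ¬ ((i:ℕ) = 0 + 1); omega)]
    rw [det_expand _ hz, Mcan_sub_succ, Mcan_sub_one, ih]
    have e0 : Mcan s t (m+2) 0 0 = t := by simp [Mcan]
    have e1 : Mcan s t (m+2) 1 0 = s := by simp [Mcan]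
    rw [e0, e1]
    ring

theorem max_abs_det_negative_s (s t : ℝ) (hs : s < 0) (ht : 0 < t) :
    ∀ n : ℕ, 1 ≤ n →
      IsGreatest {x : ℝ | ∃ A : Matrix (Fin n) (Fin n) ℝ,
        IsUpperHessenbergIcc s t A ∧ x = |A.det|} (t * (t - s) ^ (n - 1)) := by
  intro n hn
  obtain ⟨m, rfl⟩ : ∃ m, n = m + 1 := ⟨n - 1, by omega⟩
  simp only [Nat.add_sub_cancel]
  constructor
  · refine ⟨Mcan s t (m+1), hess_can s t ht (m+1), ?_⟩
    rw [det_can]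
    have hts : (0:ℝ) < t - s := by linarith
    rw [abs_of_pos (by positivity)]
  · rintro x ⟨A, hA, rfl⟩
    exact hess_bound hs ht m A hA
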